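/- Let (X,μ) be a measure space, E(X,μ) a quasi-normed subspace of the space of μ-a.e. finite measurable functions, and q_0, q, q_1 bounded variable exponents with ess inf (q − q_0) > 0 and ess inf (q_1 − q) > 0. If the continuous embeddings E(X,μ) ↪ L^{q_0(·)}(X,μ) and E(X,μ) ↪ L^{q_1(·)}(X,μ) hold, then E(X,μ) ↪ L^{q(·)}(X,μ) holds. -/

import Mathlib

open MeasureTheory Metric ENNReal

noncomputable section

/-- The semi-modular `∫ f(x)^{p(x)} dμ` of an `ℝ≥0∞`-valued function. -/
def modE {X : Type*} [MeasurableSpace X] (μ : Measure X) (p : X → ℝ) (f : X → ℝ≥0∞) : ℝ≥0∞ :=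
  ∫⁻ x, f x ^ p x ∂μ

/-- The Luxemburg quasi-norm associated to the variable exponent `p`. -/
def luxE {X : Type*} [MeasurableSpace X] (μ : Measure X) (p : X → ℝ) (f : X → ℝ≥0∞) : ℝ≥0∞ :=
  sInf {l : ℝ≥0∞ | 0 < l ∧ l ≠ ⊤ ∧ modE μ p (fun x => f x / l) ≤ 1}

/-- The Luxemburg quasi-norm of a real-valued function. -/
def luxR {X : Type*} [MeasurableSpace X] (μ : Measure X) (p : X → ℝ) (u : X → ℝ) : ℝ≥0∞ :=
  luxE μ p (fun x => (‖u x‖₊ : ℝ≥0∞))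

/-- `g` is a scalar `s(·)`-gradient of `u` on the set `E`. -/
def IsSGradOn {X : Type*} [MeasurableSpace X] [PseudoMetricSpace X] (μ : Measure X)
    (E : Set X) (s : X → ℝ) (u : X → ℝ) (g : X → ℝ≥0∞) : Prop :=
  Measurable g ∧ ∃ N : Set X, N ⊆ E ∧ μ N = 0 ∧ ∀ x ∈ E \ N, ∀ y ∈ E \ N,
    ENNReal.ofReal |u x - u y| ≤
      ENNReal.ofReal (dist x y ^ s x) * g x + ENNReal.ofReal (dist x y ^ s y) * g y

/-- `{g k}` is a vector (fractional) `s(·)`-gradient of `u` on the set `E`. -/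
def IsVGradOn {X : Type*} [MeasurableSpace X] [PseudoMetricSpace X] (μ : Measure X)
    (E : Set X) (s : X → ℝ) (u : X → ℝ) (g : ℤ → X → ℝ≥0∞) : Prop :=
  (∀ k, Measurable (g k)) ∧ ∃ N : Set X, N ⊆ E ∧ μ N = 0 ∧
    ∀ x ∈ E \ N, ∀ y ∈ E \ N, ∀ k : ℤ,
      (2 : ℝ) ^ (-(k : ℝ) - 1) ≤ dist x y → dist x y < (2 : ℝ) ^ (-(k : ℝ)) →
      ENNReal.ofReal |u x - u y| ≤
        ENNReal.ofReal (dist x y ^ s x) * g k x + ENNReal.ofReal (dist x y ^ s y) * g k y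

/-- Pointwise `ℓ^{q}`-norm of a sequence, `q ∈ (0,∞]`. -/
def seqNormE (q : ℝ≥0∞) (v : ℤ → ℝ≥0∞) : ℝ≥0∞ :=
  if q = ⊤ then ⨆ k, v k else (∑' k, v k ^ q.toReal) ^ (1 / q.toReal)

/-- The mixed `L^{p(·)}(ℓ^{q(·)})` quasi-norm. -/
def LpEllNorm {X : Type*} [MeasurableSpace X] (μ : Measure X) (p : X → ℝ) (q : X → ℝ≥0∞)
    (g : ℤ → X → ℝ≥0∞) : ℝ≥0∞ :=
  luxE μ p (fun x => seqNormE (q x) (fun k => g k x))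

/-- The semi-modular of the mixed `ℓ^{q(·)}(L^{p(·)})` space. -/
def ellLpMod {X : Type*} [MeasurableSpace X] (μ : Measure X) (p : X → ℝ) (q : X → ℝ≥0∞)
    (g : ℤ → X → ℝ≥0∞) : ℝ≥0∞ :=
  ∑' k : ℤ, sInf {l : ℝ≥0∞ | 0 < l ∧ l ≠ ⊤ ∧
    modE μ p (fun x => g k x / l ^ (1 / q x).toReal) ≤ 1}

/-- The mixed `ℓ^{q(·)}(L^{p(·)})` quasi-norm. -/
def ellLpNorm {X : Type*} [MeasurableSpace X] (μ : Measure X) (p : X → ℝ) (q : X → ℝ≥0∞)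
    (g : ℤ → X → ℝ≥0∞) : ℝ≥0∞ :=
  sInf {l : ℝ≥0∞ | 0 < l ∧ l ≠ ⊤ ∧ ellLpMod μ p q (fun k x => g k x / l) ≤ 1}

/-- Quasi-seminorm of the homogeneous variable Hajłasz–Sobolev space `Ṁ^{s(·),p(·)}(E)`. -/
def MNormOn {X : Type*} [MeasurableSpace X] [PseudoMetricSpace X] (μ : Measure X)
    (E : Set X) (p s : X → ℝ) (u : X → ℝ) : ℝ≥0∞ :=
  sInf ((fun g => luxE (μ.restrict E) p g) '' {g | IsSGradOn μ E s u g})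

/-- Quasi-seminorm of the homogeneous Hajłasz–Triebel–Lizorkin space `Ṁ^{s(·)}_{p(·),q(·)}(E)`. -/
def TLNormOn {X : Type*} [MeasurableSpace X] [PseudoMetricSpace X] (μ : Measure X)
    (E : Set X) (p : X → ℝ) (q : X → ℝ≥0∞) (s : X → ℝ) (u : X → ℝ) : ℝ≥0∞ :=
  sInf ((fun g => LpEllNorm (μ.restrict E) p q g) '' {g | IsVGradOn μ E s u g})

/-- Quasi-seminorm of the homogeneous Hajłasz–Besov space `Ṅ^{s(·)}_{p(·),q(·)}(E)`. -/
def BNormOn {X : Type*} [MeasurableSpace X] [PseudoMetricSpace X] (μ : Measure X)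
    (E : Set X) (p : X → ℝ) (q : X → ℝ≥0∞) (s : X → ℝ) (u : X → ℝ) : ℝ≥0∞ :=
  sInf ((fun g => ellLpNorm (μ.restrict E) p q g) '' {g | IsVGradOn μ E s u g})


/-- Membership in the variable exponent Lebesgue space (some scaling has finite modular). -/
def MemLpVar {X : Type*} [MeasurableSpace X] (μ : Measure X) (p : X → ℝ) (u : X → ℝ) : Prop :=
  ∃ l : ℝ≥0∞, 0 < l ∧ l ≠ ⊤ ∧ modE μ p (fun x => (‖u x‖₊ : ℝ≥0∞) / l) < ⊤

/-- a.e. positive lower bound from positive essInf. -/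
lemma essInf_lower {X : Type*} [MeasurableSpace X] {μ : Measure X} {q0 : X → ℝ}
    (h : 0 < essInf q0 μ) : ∃ a : ℝ, 0 < a ∧ ∀ᵐ x ∂μ, a ≤ q0 x := by
  by_cases hb : ∃ b : ℝ, ∀ᵐ x ∂μ, b ≤ q0 x
  · obtain ⟨b, hbb⟩ := hb
    refine ⟨essInf q0 μ / 2, by linarith, ?_⟩
    have hbd : Filter.IsBoundedUnder (· ≥ ·) (ae μ) q0 := ⟨b, Filter.eventually_map.2 hbb⟩
    filter_upwards [ae_lt_of_lt_essInf (by linarith : essInf q0 μ / 2 < essInf q0 μ) hbd]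
      with x hx using hx.le
  · exfalso
    have hset : { a : ℝ | ∀ᶠ x in ae μ, a ≤ q0 x } = ∅ := by
      ext a; simp only [Set.mem_setOf_eq, Set.mem_empty_iff_false, iff_false]
      exact fun ha => hb ⟨a, ha⟩
    have : essInf q0 μ = 0 := by
      rw [essInf, Filter.liminf_eq, hset, Real.sSup_empty]
    linarith

/-- Scaling the modular. -/
lemma modE_div_const_le {X : Type*} [MeasurableSpace X] {μ : Measure X} (p : X → ℝ) {a : ℝ}
    (ha : 0 < a) (hp : ∀ᵐ x ∂μ, a ≤ p x) (f : X → ℝ≥0∞) {c : ℝ≥0∞} (hc1 : 1 ≤ c) :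
    modE μ p (fun x => f x / c) ≤ c⁻¹ ^ a * modE μ p f := by
  have hcinv : c⁻¹ ≤ 1 := by simpa using ENNReal.inv_le_inv.mpr hc1
  have hle : ∀ᵐ x ∂μ, (f x / c) ^ p x ≤ c⁻¹ ^ a * f x ^ p x := by
    filter_upwards [hp] with x hx
    have h1 : (f x / c) ^ p x = f x ^ p x * c⁻¹ ^ p x := by
      rw [div_eq_mul_inv, ENNReal.mul_rpow_of_nonneg _ _ (ha.le.trans hx)]
    rw [h1, mul_comm]
    exact mul_le_mul_left (ENNReal.rpow_le_rpow_of_exponent_ge hcinv hx) _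
  calc modE μ p (fun x => f x / c) ≤ ∫⁻ x, c⁻¹ ^ a * f x ^ p x ∂μ := lintegral_mono_ae hle
    _ = c⁻¹ ^ a * modE μ p f := lintegral_const_mul' _ _ (by
        exact ne_top_of_le_ne_top one_ne_top (by simpa using ENNReal.rpow_le_rpow hcinv ha.le))

/-- Monotonicity of the modular in the scaling parameter. -/
lemma modE_div_mono {X : Type*} [MeasurableSpace X] {μ : Measure X} (p : X → ℝ)
    (hp : ∀ᵐ x ∂μ, 0 ≤ p x) (f : X → ℝ≥0∞) {l L : ℝ≥0∞} (h : l ≤ L) :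
    modE μ p (fun x => f x / L) ≤ modE μ p (fun x => f x / l) :=
  lintegral_mono_ae <| by
    filter_upwards [hp] with x hx
    exact ENNReal.rpow_le_rpow (ENNReal.div_le_div_left h _) hx

/-- Interpolation of the modular for a measurable function. -/
lemma modE_interp {X : Type*} [MeasurableSpace X] {μ : Measure X} {q0 q q1 : X → ℝ}
    (h01 : ∀ᵐ x ∂μ, q0 x ≤ q x) (h12 : ∀ᵐ x ∂μ, q x ≤ q1 x)
    {f : X → ℝ≥0∞} (hf : Measurable f) :
    modE μ q f ≤ modE μ q0 f + modE μ q1 f := by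
  set A : Set X := f ⁻¹' (Set.Iic 1) with hA
  have hAm : MeasurableSet A := hf measurableSet_Iic
  have key : modE μ q f = (∫⁻ x in A, f x ^ q x ∂μ) + ∫⁻ x in Aᶜ, f x ^ q x ∂μ :=
    (lintegral_add_compl _ hAm).symm
  rw [key]
  refine add_le_add ?_ ?_
  · calc (∫⁻ x in A, f x ^ q x ∂μ) ≤ ∫⁻ x in A, f x ^ q0 x ∂μ := by
          refine lintegral_mono_ae ?_
          filter_upwards [ae_restrict_of_ae h01, ae_restrict_mem hAm] with x hx hxA
          exact ENNReal.rpow_le_rpow_of_exponent_ge hxA hx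
      _ ≤ modE μ q0 f := lintegral_mono' Measure.restrict_le_self le_rfl
  · calc (∫⁻ x in Aᶜ, f x ^ q x ∂μ) ≤ ∫⁻ x in Aᶜ, f x ^ q1 x ∂μ := by
          refine lintegral_mono_ae ?_
          filter_upwards [ae_restrict_of_ae h12, ae_restrict_mem hAm.compl] with x hx hxA
          exact ENNReal.rpow_le_rpow_of_exponent_le (le_of_not_ge hxA) hx
      _ ≤ modE μ q1 f := lintegral_mono' Measure.restrict_le_self le_rfl

/-- Interpolation of embeddings: if a quasi-normed space `S` of measurable functions embeds
continuously into `L^{q₀(·)}` and into `L^{q₁(·)}`, and `q₀ ≪ q ≪ q₁`, then it embeds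
continuously into `L^{q(·)}`. -/
theorem embedding_interpolation {X : Type*} [MeasurableSpace X] (μ : Measure X)
    (q0 q q1 : X → ℝ)
    (hq0 : 0 < essInf q0 μ) (hq0b : ∃ C : ℝ, ∀ᵐ x ∂μ, q0 x ≤ C)
    (hq : 0 < essInf q μ) (hqb : ∃ C : ℝ, ∀ᵐ x ∂μ, q x ≤ C)
    (hq1 : 0 < essInf q1 μ) (hq1b : ∃ C : ℝ, ∀ᵐ x ∂μ, q1 x ≤ C)
    (h0 : ∃ ε : ℝ, 0 < ε ∧ ∀ᵐ x ∂μ, ε ≤ q x - q0 x)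
    (h1 : ∃ ε : ℝ, 0 < ε ∧ ∀ᵐ x ∂μ, ε ≤ q1 x - q x)
    (S : Set (X → ℝ)) (hSmeas : ∀ u ∈ S, Measurable u)
    (hSsmul : ∀ u ∈ S, ∀ c : ℝ, (fun x => c * u x) ∈ S)
    (N : (X → ℝ) → ℝ≥0∞)
    (hNhom : ∀ (u : X → ℝ) (c : ℝ), N (fun x => c * u x) = ENNReal.ofReal |c| * N u)
    (hE0 : (∀ u ∈ S, MemLpVar μ q0 u) ∧
      ∃ C0 : ℝ≥0∞, C0 ≠ ⊤ ∧ ∀ u ∈ S, luxR μ q0 u ≤ C0 * N u)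
    (hE1 : (∀ u ∈ S, MemLpVar μ q1 u) ∧
      ∃ C1 : ℝ≥0∞, C1 ≠ ⊤ ∧ ∀ u ∈ S, luxR μ q1 u ≤ C1 * N u) :
    (∀ u ∈ S, MemLpVar μ q u) ∧
      ∃ C : ℝ≥0∞, C ≠ ⊤ ∧ ∀ u ∈ S, luxR μ q u ≤ C * N u := by
  obtain ⟨hE0mem, C0, hC0top, hC0⟩ := hE0
  obtain ⟨hE1mem, C1, hC1top, hC1⟩ := hE1
  obtain ⟨a0, ha0, ha0le⟩ := essInf_lower hq0
  obtain ⟨a1, ha1, ha1le⟩ := essInf_lower hq1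
  set a := min a0 a1 with ha_def
  have ha : 0 < a := lt_min ha0 ha1
  have haq0 : ∀ᵐ x ∂μ, a ≤ q0 x := ha0le.mono fun x hx => (min_le_left _ _).trans hx
  have haq1 : ∀ᵐ x ∂μ, a ≤ q1 x := ha1le.mono fun x hx => (min_le_right _ _).trans hx
  obtain ⟨ε0, hε0, h01'⟩ := h0
  obtain ⟨ε1, hε1, h12'⟩ := h1
  have h01 : ∀ᵐ x ∂μ, q0 x ≤ q x := h01'.mono fun x hx => by linarith
  have h12 : ∀ᵐ x ∂μ, q x ≤ q1 x := h12'.mono fun x hx => by linarith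
  set c : ℝ≥0∞ := (2 : ℝ≥0∞) ^ (1 / a) with hc_def
  have hc1 : 1 ≤ c := by
    calc (1 : ℝ≥0∞) = 1 ^ (1 / a) := (ENNReal.one_rpow _).symm
      _ ≤ c := ENNReal.rpow_le_rpow one_le_two (by positivity)
  have hctop : c ≠ ⊤ := ENNReal.rpow_ne_top_of_nonneg (by positivity) (by norm_num)
  have hc0 : c ≠ 0 := (one_pos.trans_le hc1).ne'
  have hchalf : c⁻¹ ^ a = 2⁻¹ := by
    rw [hc_def, ← ENNReal.rpow_neg, ← ENNReal.rpow_mul,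
      show -(1 / a) * a = -1 by field_simp, ENNReal.rpow_neg_one]
  -- key membership claim
  have claim1 : ∀ f : X → ℝ≥0∞, Measurable f → ∀ l0 l1 : ℝ≥0∞,
      (0 < l0 ∧ l0 ≠ ⊤ ∧ modE μ q0 (fun x => f x / l0) ≤ 1) →
      (0 < l1 ∧ l1 ≠ ⊤ ∧ modE μ q1 (fun x => f x / l1) ≤ 1) →
      0 < c * max l0 l1 ∧ c * max l0 l1 ≠ ⊤ ∧
        modE μ q (fun x => f x / (c * max l0 l1)) ≤ 1 := by
    rintro f hf l0 l1 ⟨hl0pos, hl0top, hm0⟩ ⟨hl1pos, hl1top, hm1⟩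
    set L := max l0 l1 with hL_def
    have hLpos : 0 < L := lt_max_of_lt_left hl0pos
    have hLtop : L ≠ ⊤ := (max_lt hl0top.lt_top hl1top.lt_top).ne
    have hrw : (fun x => f x / (c * L)) = fun x => (f x / L) / c := by
      funext x
      rw [div_eq_mul_inv, div_eq_mul_inv, div_eq_mul_inv,
        ENNReal.mul_inv (Or.inl hc0) (Or.inl hctop), mul_comm c⁻¹ L⁻¹, ← mul_assoc]
    have hq0nonneg : ∀ᵐ x ∂μ, (0 : ℝ) ≤ q0 x := haq0.mono fun x hx => ha.le.trans hx
    have hq1nonneg : ∀ᵐ x ∂μ, (0 : ℝ) ≤ q1 x := haq1.mono fun x hx => ha.le.trans hx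
    refine ⟨ENNReal.mul_pos hc0 hLpos.ne', ENNReal.mul_ne_top hctop hLtop, ?_⟩
    have hmeas : Measurable fun x => f x / (c * L) := hf.div_const _
    have hterm0 : modE μ q0 (fun x => f x / (c * L)) ≤ 2⁻¹ := by
      rw [hrw]
      calc modE μ q0 (fun x => f x / L / c) ≤ c⁻¹ ^ a * modE μ q0 (fun x => f x / L) :=
            modE_div_const_le q0 ha haq0 _ hc1
        _ ≤ 2⁻¹ * 1 := by
            rw [hchalf]
            exact mul_le_mul_right
              ((modE_div_mono q0 hq0nonneg f (le_max_left _ _)).trans hm0) _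
        _ = 2⁻¹ := mul_one _
    have hterm1 : modE μ q1 (fun x => f x / (c * L)) ≤ 2⁻¹ := by
      rw [hrw]
      calc modE μ q1 (fun x => f x / L / c) ≤ c⁻¹ ^ a * modE μ q1 (fun x => f x / L) :=
            modE_div_const_le q1 ha haq1 _ hc1
        _ ≤ 2⁻¹ * 1 := by
            rw [hchalf]
            exact mul_le_mul_right
              ((modE_div_mono q1 hq1nonneg f (le_max_right _ _)).trans hm1) _
        _ = 2⁻¹ := mul_one _
    calc modE μ q (fun x => f x / (c * L))
        ≤ modE μ q0 (fun x => f x / (c * L)) + modE μ q1 (fun x => f x / (c * L)) :=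
          modE_interp h01 h12 hmeas
      _ ≤ 2⁻¹ + 2⁻¹ := add_le_add hterm0 hterm1
      _ = 1 := ENNReal.inv_two_add_inv_two
  -- improving finiteness of the modular to a bound by one
  have claim_up : ∀ p : X → ℝ, (∀ᵐ x ∂μ, a ≤ p x) → ∀ u : X → ℝ, MemLpVar μ p u →
      ∃ l : ℝ≥0∞, 0 < l ∧ l ≠ ⊤ ∧ modE μ p (fun x => (‖u x‖₊ : ℝ≥0∞) / l) ≤ 1 := by
    rintro p hap u ⟨l, hlpos, hltop, hmfin⟩
    set f : X → ℝ≥0∞ := fun x => (‖u x‖₊ : ℝ≥0∞) with hf_def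
    set M := modE μ p (fun x => f x / l) with hM_def
    by_cases hM0 : M = 0
    · exact ⟨l, hlpos, hltop, by rw [← hM_def, hM0]; exact zero_le_one⟩
    set d : ℝ≥0∞ := 1 + M ^ (1 / a) with hd_def
    have hd1 : (1 : ℝ≥0∞) ≤ d := le_self_add
    have hdtop : d ≠ ⊤ :=
      ENNReal.add_ne_top.2 ⟨one_ne_top, ENNReal.rpow_ne_top_of_nonneg (by positivity) hmfin.ne⟩
    have hd0 : d ≠ 0 := (one_pos.trans_le hd1).ne'
    refine ⟨d * l, ENNReal.mul_pos hd0 hlpos.ne', ENNReal.mul_ne_top hdtop hltop, ?_⟩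
    have hrw : (fun x => f x / (d * l)) = fun x => (f x / l) / d := by
      funext x
      rw [div_eq_mul_inv, div_eq_mul_inv, div_eq_mul_inv,
        ENNReal.mul_inv (Or.inl hd0) (Or.inl hdtop), mul_comm d⁻¹ l⁻¹, ← mul_assoc]
    have hMd : M ≤ d ^ a := by
      calc M = (M ^ (1 / a)) ^ a := by
            rw [← ENNReal.rpow_mul, show 1 / a * a = 1 by field_simp, ENNReal.rpow_one]
        _ ≤ d ^ a := ENNReal.rpow_le_rpow le_add_self ha.le
    rw [hrw]
    calc modE μ p (fun x => f x / l / d) ≤ d⁻¹ ^ a * M := modE_div_const_le p ha hap _ hd1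
      _ ≤ M⁻¹ * M := by
          refine mul_le_mul_left ?_ _
          rw [ENNReal.inv_rpow]
          exact ENNReal.inv_le_inv.2 hMd
      _ = 1 := ENNReal.inv_mul_cancel hM0 hmfin.ne
  have hmemq : ∀ u ∈ S, MemLpVar μ q u := by
    intro u hu
    obtain ⟨l0, h0'⟩ := claim_up q0 haq0 u (hE0mem u hu)
    obtain ⟨l1, h1'⟩ := claim_up q1 haq1 u (hE1mem u hu)
    obtain ⟨hp, ht, hm⟩ := claim1 _
      (measurable_coe_nnreal_ennreal.comp (hSmeas u hu).nnnorm) l0 l1 h0' h1'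
    exact ⟨c * max l0 l1, hp, ht, hm.trans_lt one_lt_top⟩
  refine ⟨hmemq, c * (C0 + C1), ENNReal.mul_ne_top hctop (ENNReal.add_ne_top.2 ⟨hC0top, hC1top⟩), ?_⟩
  intro u hu
  set f : X → ℝ≥0∞ := fun x => (‖u x‖₊ : ℝ≥0∞) with hf_def
  have hfm : Measurable f := measurable_coe_nnreal_ennreal.comp (hSmeas u hu).nnnorm
  set A0 : Set ℝ≥0∞ := {l | 0 < l ∧ l ≠ ⊤ ∧ modE μ q0 (fun x => f x / l) ≤ 1} with hA0_def
  set A1 : Set ℝ≥0∞ := {l | 0 < l ∧ l ≠ ⊤ ∧ modE μ q1 (fun x => f x / l) ≤ 1} with hA1_def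
  obtain ⟨l0', hl0'⟩ := claim_up q0 haq0 u (hE0mem u hu)
  obtain ⟨l1', hl1'⟩ := claim_up q1 haq1 u (hE1mem u hu)
  have hl0'A : l0' ∈ A0 := hl0'
  have hl1'A : l1' ∈ A1 := hl1'
  have hs0top : sInf A0 ≠ ⊤ := ((sInf_le hl0'A).trans_lt hl0'.2.1.lt_top).ne
  have hs1top : sInf A1 ≠ ⊤ := ((sInf_le hl1'A).trans_lt hl1'.2.1.lt_top).ne
  have hlux0 : luxR μ q0 u = sInf A0 := rfl
  have hlux1 : luxR μ q1 u = sInf A1 := rfl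
  have hkey : luxR μ q u ≤ c * (sInf A0 + sInf A1) := by
    refine ENNReal.le_of_forall_pos_le_add fun ε hε hfin => ?_
    set δ : ℝ≥0∞ := (ε : ℝ≥0∞) / (2 * c) with hδ_def
    have h2c0 : (2 : ℝ≥0∞) * c ≠ 0 := by
      simp [hc0]
    have h2ctop : (2 : ℝ≥0∞) * c ≠ ⊤ := ENNReal.mul_ne_top (by norm_num) hctop
    have hδ0 : δ ≠ 0 := by
      simp only [hδ_def, ne_eq, ENNReal.div_eq_zero_iff, not_or]
      exact ⟨by exact_mod_cast hε.ne', h2ctop⟩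
    obtain ⟨l0, hl0A, hl0lt⟩ := sInf_lt_iff.mp (ENNReal.lt_add_right hs0top hδ0)
    obtain ⟨l1, hl1A, hl1lt⟩ := sInf_lt_iff.mp (ENNReal.lt_add_right hs1top hδ0)
    obtain ⟨hp', ht', hm'⟩ := claim1 f hfm l0 l1 hl0A hl1A
    have h1 : luxR μ q u ≤ c * max l0 l1 := sInf_le ⟨hp', ht', hm'⟩
    have hcancel : c * 2 * δ = ε := by
      rw [hδ_def, mul_comm c 2, ENNReal.mul_div_cancel h2c0 h2ctop]
    calc luxR μ q u ≤ c * max l0 l1 := h1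
      _ ≤ c * (l0 + l1) := mul_le_mul_right (max_le le_self_add le_add_self) _
      _ ≤ c * ((sInf A0 + δ) + (sInf A1 + δ)) :=
          mul_le_mul_right (add_le_add hl0lt.le hl1lt.le) _
      _ = c * (sInf A0 + sInf A1) + c * 2 * δ := by ring
      _ = c * (sInf A0 + sInf A1) + ε := by rw [hcancel]
  calc luxR μ q u ≤ c * (sInf A0 + sInf A1) := hkey
    _ ≤ c * (C0 * N u + C1 * N u) := by
        refine mul_le_mul_right (add_le_add ?_ ?_) _
        · rw [← hlux0]; exact hC0 u hu
        · rw [← hlux1]; exact hC1 u hu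
    _ = c * (C0 + C1) * N u := by ring

end
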